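/- If G = (N, T, P, S) is a context-free grammar in Chomsky normal form, then there exist a grammar G' = (N', T, P', S) in Dyck normal form with L(G') = L(G) and a map h_d : N' ∪ T → N ∪ T, acting as the identity on T and with h_d(S) = S, such that for every word w ∈ L(G), applying h_d symbol-wise to any leftmost derivation of w in G' yields a leftmost derivation of w in G; consequently every derivation tree of w in G is the image under h_d of a derivation tree of w in G'. -/

import Mathlib

namespace CS

/-! ### Brackets and Dyck languages -/

/-- A bracket over `k` letters: `(i, true)` is the left bracket `[ᵢ` and
`(i, false)` is the right bracket `]ᵢ`. -/
abbrev Bracket (k : ℕ) : Type := Fin k × Bool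

/-- The one-sided Dyck language `D_k` over `k` letters, i.e. the language generated by the
context-free grammar with rules `S → [ᵢ S ]ᵢ`, `S → SS`, `S → [ᵢ ]ᵢ` for `1 ≤ i ≤ k`. -/
inductive IsDyck {k : ℕ} : List (Bracket k) → Prop
  | pair (i : Fin k) : IsDyck [(i, true), (i, false)]
  | wrap (i : Fin k) {w : List (Bracket k)} (hw : IsDyck w) :
      IsDyck ((i, true) :: w ++ [(i, false)])
  | concat {u v : List (Bracket k)} (hu : IsDyck u) (hv : IsDyck v) : IsDyck (u ++ v)

/-- The number of left (open) brackets in `w`. -/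
def opens {k : ℕ} (w : List (Bracket k)) : ℕ := (w.filter fun b => b.2).length

/-- The number of right (close) brackets in `w`. -/
def closes {k : ℕ} (w : List (Bracket k)) : ℕ := (w.filter fun b => !b.2).length

/-- A string is balanced if it has as many left brackets as right brackets and every prefix
has at least as many left brackets as right brackets.  (This is the balancedness of the image
of the string under the homomorphism `h` sending every `[ᵢ` to `[₁` and every `]ᵢ` to `]₁`.) -/
def IsBalanced {k : ℕ} (w : List (Bracket k)) : Prop :=
  opens w = closes w ∧ ∀ p : List (Bracket k), p <+: w → closes p ≤ opens p

/-- The substring `w_{i:j}` of `w` starting at the `i`-th position and ending at the `j`-th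
position (1-indexed, inclusive). -/
def substr {α : Type*} (w : List α) (i j : ℕ) : List α := (w.drop (i - 1)).take (j - i + 1)

/-- `(i, j)` is a matched pair of `w` if `1 ≤ i ≤ j ≤ |w|` and `h(w_{i:j})` is balanced. -/
def MatchedPair {k : ℕ} (w : List (Bracket k)) (i j : ℕ) : Prop :=
  1 ≤ i ∧ i ≤ j ∧ j ≤ w.length ∧ IsBalanced (substr w i j)

/-- `(i, j)` is a nested pair of `w` if it is a matched pair and either `j = i + 1` or
`(i + 1, j - 1)` is a matched pair. -/
def NestedPair {k : ℕ} (w : List (Bracket k)) (i j : ℕ) : Prop :=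
  MatchedPair w i j ∧ (j = i + 1 ∨ MatchedPair w (i + 1) (j - 1))

/-- The homomorphism `h_{k'}` keeping only the brackets indexed by `k'` (sent to `[₁`/`]₁`)
and erasing all other brackets. -/
def projIdx {k : ℕ} (i : Fin k) (w : List (Bracket k)) : List (Bracket 1) :=
  (w.filter fun b => decide (b.1 = i)).map fun b => ((0 : Fin 1), b.2)

/-! ### Grammars: Chomsky and Dyck normal forms -/

variable {T : Type}

/-- Chomsky normal form: every rule has the form `A → BC` or `A → a`, except possibly
`S → λ`, and the initial nonterminal never occurs on the right-hand side of a rule. -/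
def IsChomskyNF (g : ContextFreeGrammar T) : Prop :=
  (∀ r ∈ g.rules,
      (∃ B C : g.NT, r.output = [Symbol.nonterminal B, Symbol.nonterminal C]) ∨
      (∃ a : T, r.output = [Symbol.terminal a]) ∨
      (r.input = g.initial ∧ r.output = [])) ∧
  (∀ r ∈ g.rules, Symbol.nonterminal g.initial ∉ r.output)

/-- Dyck normal form (Definition 1.1):
(1) Chomsky normal form;
(2) if `A → a` with `A ≠ S` then no other rule rewrites `A`;
(3) if some rule `X → AB` is in `P` then no rule of the form `X' → B'A` is in `P`
    (equivalently, no nonterminal occurs both as a left member and as a right member of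
    right-hand sides of two-nonterminal rules);
(4) for rules `X → AB` and `X' → A'B` one has `A = A'`, and for rules `X → AB` and
    `X' → AB'` one has `B = B'`. -/
def IsDyckNF (g : ContextFreeGrammar T) : Prop :=
  IsChomskyNF g ∧
  (∀ r ∈ g.rules, ∀ a : T, r.output = [Symbol.terminal a] → r.input ≠ g.initial →
      ∀ r' ∈ g.rules, r'.input = r.input → r' = r) ∧
  (∀ r ∈ g.rules, ∀ r' ∈ g.rules, ∀ A B B' : g.NT,
      r.output = [Symbol.nonterminal A, Symbol.nonterminal B] →
      r'.output ≠ [Symbol.nonterminal B', Symbol.nonterminal A]) ∧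
  (∀ r ∈ g.rules, ∀ r' ∈ g.rules, ∀ A A' B B' : g.NT,
      r.output = [Symbol.nonterminal A, Symbol.nonterminal B] →
      r'.output = [Symbol.nonterminal A', Symbol.nonterminal B'] →
      (B = B' → A = A') ∧ (A = A' → B = B'))

/-- Extension of a map on nonterminals to a map on symbols, acting as the identity on
terminal symbols. -/
def mapSym {N N' : Type*} (f : N → N') : Symbol T N → Symbol T N'
  | .terminal t => .terminal t
  | .nonterminal A => .nonterminal (f A)

/-- One leftmost derivation step rewriting the (leftmost) nonterminal `A`:
everything to the left of the rewritten occurrence of `A` is terminal. -/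
def LeftmostStep (g : ContextFreeGrammar T) (u v : List (Symbol T g.NT)) (A : g.NT) : Prop :=
  ∃ r ∈ g.rules, r.input = A ∧ ∃ (p : List T) (s : List (Symbol T g.NT)),
    u = p.map Symbol.terminal ++ Symbol.nonterminal A :: s ∧
    v = p.map Symbol.terminal ++ r.output ++ s

/-- One leftmost derivation step. -/
def LeftmostProduces (g : ContextFreeGrammar T) (u v : List (Symbol T g.NT)) : Prop :=
  ∃ A : g.NT, LeftmostStep g u v A

/-- `LmTrace g u v l` : there is a leftmost derivation in `g` from `u` to `v` whose
consecutively rewritten nonterminals are listed (in order) in `l`. -/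
inductive LmTrace (g : ContextFreeGrammar T) :
    List (Symbol T g.NT) → List (Symbol T g.NT) → List g.NT → Prop
  | refl (u : List (Symbol T g.NT)) : LmTrace g u u []
  | tail {u v w : List (Symbol T g.NT)} {l : List g.NT} {A : g.NT}
      (huv : LmTrace g u v l) (hvw : LeftmostStep g v w A) : LmTrace g u w (l ++ [A])

/-- `t` is the trace-word of the terminal word `w` associated with some leftmost derivation of
`w` in `g`: the concatenation of the nonterminals consecutively rewritten in the derivation,
excluding the axiom (which is the first rewritten nonterminal).  Trace-words are only
associated with derivations `S ⇒ u₁ ⇒ ⋯ ⇒ u_{2n-1} = w` with `n ≥ 2`, i.e. `t ≠ []`. -/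
def IsTraceWord (g : ContextFreeGrammar T) (w : List T) (t : List g.NT) : Prop :=
  t ≠ [] ∧ LmTrace g [Symbol.nonterminal g.initial] (w.map Symbol.terminal) (g.initial :: t)

/-- `A` is rewritten by a terminal rule `A → t` (i.e. `φ(A) ∈ T`). -/
def RewritesToTerminal (g : ContextFreeGrammar T) (A : g.NT) : Prop :=
  ∃ r ∈ g.rules, r.input = A ∧ ∃ t : T, r.output = [Symbol.terminal t]

/-- The rule `A → a` belongs to the grammar. -/
def TerminalRule (g : ContextFreeGrammar T) (A : g.NT) (a : T) : Prop :=
  ∃ r ∈ g.rules, r.input = A ∧ r.output = [Symbol.terminal a]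

/-- Linear grammar: all rules are of the forms `X → λ`, `X → t`, `X → tY`, `X → Yt`,
`X → t₁Yt₂`. -/
def IsLinear (g : ContextFreeGrammar T) : Prop :=
  ∀ r ∈ g.rules,
    r.output = [] ∨
    (∃ t : T, r.output = [Symbol.terminal t]) ∨
    (∃ (t : T) (Y : g.NT), r.output = [Symbol.terminal t, Symbol.nonterminal Y]) ∨
    (∃ (t : T) (Y : g.NT), r.output = [Symbol.nonterminal Y, Symbol.terminal t]) ∨
    (∃ (t₁ t₂ : T) (Y : g.NT),
      r.output = [Symbol.terminal t₁, Symbol.nonterminal Y, Symbol.terminal t₂])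

/-- Linear-Dyck normal form: Dyck normal form with `N⁽³⁾ = ∅`, i.e. in every
two-nonterminal rule `X → AB` at least one of `A`, `B` is rewritten by a terminal rule. -/
def IsLinearDyckNF (g : ContextFreeGrammar T) : Prop :=
  IsDyckNF g ∧
  ∀ r ∈ g.rules, ∀ A B : g.NT,
    r.output = [Symbol.nonterminal A, Symbol.nonterminal B] →
    (RewritesToTerminal g A ∨ RewritesToTerminal g B)

/-- `(A, B)` is a pairwise pair of brackets in `N⁽¹⁾`: it occurs as the right-hand side of a
two-nonterminal rule and both members are rewritten by terminal rules. -/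
def IsN1Pair (g : ContextFreeGrammar T) (A B : g.NT) : Prop :=
  (∃ r ∈ g.rules, r.output = [Symbol.nonterminal A, Symbol.nonterminal B]) ∧
  RewritesToTerminal g A ∧ RewritesToTerminal g B

/-- `C` is a bracket of some pair in `N⁽¹⁾`. -/
def IsN1Bracket (g : ContextFreeGrammar T) (C : g.NT) : Prop :=
  ∃ A B : g.NT, IsN1Pair g A B ∧ (C = A ∨ C = B)

/-- The grammar over terminals `T` whose nonterminals are the axiom `S` (`none`) together
with the `2k` brackets `[₁, …, [ₖ, ]₁, …, ]ₖ`, with the given rules. -/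
abbrev bracketGrammar (k : ℕ) (rs : Finset (ContextFreeRule T (Option (Bracket k)))) :
    ContextFreeGrammar T :=
  ⟨Option (Bracket k), none, rs⟩

/-! ### Construction of the Dyck normal form grammar -/

section DyckConstruction

open ContextFreeGrammar

attribute [local instance] Classical.propDecidable

variable (g : ContextFreeGrammar.{0} T)

/-- First nonterminal of a binary output (junk value otherwise). -/
def nt1 (r : ContextFreeRule T g.NT) : g.NT :=
  match r.output with
  | [Symbol.nonterminal A, Symbol.nonterminal _] => A
  | _ => g.initial

/-- Second nonterminal of a binary output (junk value otherwise). -/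
def nt2 (r : ContextFreeRule T g.NT) : g.NT :=
  match r.output with
  | [Symbol.nonterminal _, Symbol.nonterminal B] => B
  | _ => g.initial

/-- The rule has a two-nonterminal right-hand side. -/
def IsBin (r : ContextFreeRule T g.NT) : Prop :=
  ∃ A B : g.NT, r.output = [Symbol.nonterminal A, Symbol.nonterminal B]

lemma isBin_out {r : ContextFreeRule T g.NT} (h : IsBin g r) :
    r.output = [Symbol.nonterminal (nt1 g r), Symbol.nonterminal (nt2 g r)] := by
  obtain ⟨A, B, hAB⟩ := h
  simp only [nt1, nt2, hAB]

/-- Possible "tags" for a nonterminal `A`: `none` (to be rewritten by two-nonterminal rules)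
or `some a` for each terminal rule `A → a`. -/
noncomputable def tags (A : g.NT) : Finset (Option T) :=
  insert none ((g.rules.filter fun r => r.input = A ∧ ∃ a : T, r.output = [Symbol.terminal a]).image
    fun r => match r.output with | [Symbol.terminal a] => some a | _ => none)

lemma none_mem_tags (A : g.NT) : none ∈ tags g A := Finset.mem_insert_self _ _

lemma some_mem_tags_iff {A : g.NT} {a : T} :
    some a ∈ tags g A ↔ ∃ r ∈ g.rules, r.input = A ∧ r.output = [Symbol.terminal a] := by
  constructor
  · intro h
    rcases Finset.mem_insert.1 h with h | h
    · exact absurd h (by simp)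
    · obtain ⟨r, hr, hra⟩ := Finset.mem_image.1 h
      obtain ⟨hmem, hin, b, hout⟩ := Finset.mem_filter.1 hr
      refine ⟨r, hmem, hin, ?_⟩
      rw [hout] at hra ⊢
      simp only at hra
      rw [Option.some.injEq] at hra
      rw [hra]
  · rintro ⟨r, hmem, hin, hout⟩
    refine Finset.mem_insert_of_mem (Finset.mem_image.2 ⟨r, Finset.mem_filter.2 ⟨hmem, hin, a, hout⟩, ?_⟩)
    rw [hout]

/-- Brackets of the new grammar: a rule of `g`, a tag for each of the two sides, and a side. -/
abbrev Br : Type := ContextFreeRule T g.NT × Option T × Option T × Bool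

/-- Nonterminals of the new grammar. -/
abbrev NTD : Type := Option (Br g)

/-- The homomorphism back to the nonterminals of `g`. -/
def hd : NTD g → g.NT
  | none => g.initial
  | some (r, _, _, true) => nt1 g r
  | some (r, _, _, false) => nt2 g r

/-- The tag of the side of the bracket. -/
def sideTag : Br g → Option T
  | (_, cA, _, true) => cA
  | (_, _, cB, false) => cB

/-- Nonterminals of the new grammar that may be rewritten by a rule whose `g`-image has
input `X`. -/
noncomputable def parents (X : g.NT) : Finset (NTD g) :=
  ((if X = g.initial then {(none : NTD g)} else ∅) ∪
  ((g.rules.filter fun r₀ => nt1 g r₀ = X).biUnion fun r₀ =>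
    (tags g (nt2 g r₀)).image fun cB₀ => (some (r₀, none, cB₀, true) : NTD g))) ∪
  ((g.rules.filter fun r₀ => nt2 g r₀ = X).biUnion fun r₀ =>
    (tags g (nt1 g r₀)).image fun cA₀ => (some (r₀, cA₀, none, false) : NTD g))

lemma mem_parents_iff {X : g.NT} {X' : NTD g} :
    X' ∈ parents g X ↔
      (X' = none ∧ X = g.initial) ∨
      (∃ r₀ cB₀, r₀ ∈ g.rules ∧ nt1 g r₀ = X ∧ cB₀ ∈ tags g (nt2 g r₀) ∧
        X' = some (r₀, none, cB₀, true)) ∨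
      (∃ r₀ cA₀, r₀ ∈ g.rules ∧ nt2 g r₀ = X ∧ cA₀ ∈ tags g (nt1 g r₀) ∧
        X' = some (r₀, cA₀, none, false)) := by
  constructor
  · intro h
    rcases Finset.mem_union.1 h with h | h
    · rcases Finset.mem_union.1 h with h | h
      · by_cases hX : X = g.initial
        · rw [if_pos hX] at h
          exact Or.inl ⟨Finset.mem_singleton.1 h, hX⟩
        · rw [if_neg hX] at h
          exact absurd h (Finset.notMem_empty _)
      · obtain ⟨r₀, hr₀, hmem⟩ := Finset.mem_biUnion.1 h
        obtain ⟨hr, hX⟩ := Finset.mem_filter.1 hr₀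
        obtain ⟨cB₀, hcB, rfl⟩ := Finset.mem_image.1 hmem
        exact Or.inr (Or.inl ⟨r₀, cB₀, hr, hX, hcB, rfl⟩)
    · obtain ⟨r₀, hr₀, hmem⟩ := Finset.mem_biUnion.1 h
      obtain ⟨hr, hX⟩ := Finset.mem_filter.1 hr₀
      obtain ⟨cA₀, hcA, rfl⟩ := Finset.mem_image.1 hmem
      exact Or.inr (Or.inr ⟨r₀, cA₀, hr, hX, hcA, rfl⟩)
  · rintro (⟨rfl, rfl⟩ | ⟨r₀, cB₀, hr, hX, hcB, rfl⟩ | ⟨r₀, cA₀, hr, hX, hcA, rfl⟩)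
    · exact Finset.mem_union.2 (Or.inl (Finset.mem_union.2 (Or.inl (by rw [if_pos rfl]; exact Finset.mem_singleton_self _))))
    · exact Finset.mem_union.2 (Or.inl (Finset.mem_union.2 (Or.inr
        (Finset.mem_biUnion.2 ⟨r₀, Finset.mem_filter.2 ⟨hr, hX⟩, Finset.mem_image.2 ⟨cB₀, hcB, rfl⟩⟩))))
    · exact Finset.mem_union.2 (Or.inr
        (Finset.mem_biUnion.2 ⟨r₀, Finset.mem_filter.2 ⟨hr, hX⟩, Finset.mem_image.2 ⟨cA₀, hcA, rfl⟩⟩))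

/-- The right-hand side of the pair rule coming from rule `r` with tags `cA`, `cB`. -/
def pairOut (r : ContextFreeRule T g.NT) (cA cB : Option T) : List (Symbol T (NTD g)) :=
  [Symbol.nonterminal (some (r, cA, cB, true)), Symbol.nonterminal (some (r, cA, cB, false))]

/-- The two-nonterminal rules of the new grammar. -/
noncomputable def pairRules : Finset (ContextFreeRule T (NTD g)) :=
  (g.rules.filter fun r => IsBin g r).biUnion fun r =>
    (tags g (nt1 g r)).biUnion fun cA =>
      (tags g (nt2 g r)).biUnion fun cB =>
        (parents g r.input).image fun X' => ⟨X', pairOut g r cA cB⟩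

/-- The terminal rules of the new grammar rewriting brackets. -/
noncomputable def termRules : Finset (ContextFreeRule T (NTD g)) :=
  (g.rules.filter fun r => IsBin g r).biUnion fun r =>
    (tags g (nt1 g r)).biUnion fun cA =>
      (tags g (nt2 g r)).biUnion fun cB =>
        ((cA.elim ∅ fun a =>
            {(⟨some (r, cA, cB, true), [Symbol.terminal a]⟩ : ContextFreeRule T (NTD g))}) ∪
         (cB.elim ∅ fun b =>
            {(⟨some (r, cA, cB, false), [Symbol.terminal b]⟩ : ContextFreeRule T (NTD g))}))

/-- The rules of the new grammar rewriting the axiom by a terminal or the empty word. -/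
noncomputable def initRules : Finset (ContextFreeRule T (NTD g)) :=
  (g.rules.filter fun r =>
      r.input = g.initial ∧ (r.output = [] ∨ ∃ a : T, r.output = [Symbol.terminal a])).image
    fun r => ⟨none, r.output.map (mapSym fun _ => (none : NTD g))⟩

/-- The Dyck normal form grammar constructed from `g`. -/
noncomputable abbrev gD : ContextFreeGrammar.{0} T := ⟨NTD g, none, pairRules g ∪ termRules g ∪ initRules g⟩

lemma pairRule_mem {r : ContextFreeRule T g.NT} {cA cB : Option T} {X' : NTD g}
    (hr : r ∈ g.rules) (hb : IsBin g r) (hcA : cA ∈ tags g (nt1 g r))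
    (hcB : cB ∈ tags g (nt2 g r)) (hX : X' ∈ parents g r.input) :
    (⟨X', pairOut g r cA cB⟩ : ContextFreeRule T (NTD g)) ∈ (gD g).rules := by
  refine Finset.mem_union.2 (Or.inl (Finset.mem_union.2 (Or.inl ?_)))
  exact Finset.mem_biUnion.2 ⟨r, Finset.mem_filter.2 ⟨hr, hb⟩,
    Finset.mem_biUnion.2 ⟨cA, hcA, Finset.mem_biUnion.2 ⟨cB, hcB,
      Finset.mem_image.2 ⟨X', hX, rfl⟩⟩⟩⟩

lemma termRule_mem_left {r : ContextFreeRule T g.NT} {cB : Option T} {a : T}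
    (hr : r ∈ g.rules) (hb : IsBin g r) (hcA : some a ∈ tags g (nt1 g r))
    (hcB : cB ∈ tags g (nt2 g r)) :
    (⟨some (r, some a, cB, true), [Symbol.terminal a]⟩ : ContextFreeRule T (NTD g)) ∈
      (gD g).rules := by
  refine Finset.mem_union.2 (Or.inl (Finset.mem_union.2 (Or.inr ?_)))
  exact Finset.mem_biUnion.2 ⟨r, Finset.mem_filter.2 ⟨hr, hb⟩,
    Finset.mem_biUnion.2 ⟨some a, hcA, Finset.mem_biUnion.2 ⟨cB, hcB,
      Finset.mem_union.2 (Or.inl (by simp))⟩⟩⟩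

lemma termRule_mem_right {r : ContextFreeRule T g.NT} {cA : Option T} {b : T}
    (hr : r ∈ g.rules) (hb : IsBin g r) (hcA : cA ∈ tags g (nt1 g r))
    (hcB : some b ∈ tags g (nt2 g r)) :
    (⟨some (r, cA, some b, false), [Symbol.terminal b]⟩ : ContextFreeRule T (NTD g)) ∈
      (gD g).rules := by
  refine Finset.mem_union.2 (Or.inl (Finset.mem_union.2 (Or.inr ?_)))
  exact Finset.mem_biUnion.2 ⟨r, Finset.mem_filter.2 ⟨hr, hb⟩,
    Finset.mem_biUnion.2 ⟨cA, hcA, Finset.mem_biUnion.2 ⟨some b, hcB,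
      Finset.mem_union.2 (Or.inr (by simp))⟩⟩⟩

lemma initRule_mem {r : ContextFreeRule T g.NT} (hr : r ∈ g.rules) (hin : r.input = g.initial)
    (hout : r.output = [] ∨ ∃ a : T, r.output = [Symbol.terminal a]) :
    (⟨none, r.output.map (mapSym fun _ => (none : NTD g))⟩ : ContextFreeRule T (NTD g)) ∈
      (gD g).rules :=
  Finset.mem_union.2 (Or.inr (Finset.mem_image.2 ⟨r, Finset.mem_filter.2 ⟨hr, hin, hout⟩, rfl⟩))

/-- Shape analysis of the rules of the constructed grammar. -/
lemma rules_shape {r' : ContextFreeRule T (NTD g)} (h : r' ∈ (gD g).rules) :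
    (∃ r cA cB X', r ∈ g.rules ∧ IsBin g r ∧ cA ∈ tags g (nt1 g r) ∧ cB ∈ tags g (nt2 g r) ∧
       X' ∈ parents g r.input ∧ r' = ⟨X', pairOut g r cA cB⟩) ∨
    (∃ (r : ContextFreeRule T g.NT) (cB : Option T) (a : T), some a ∈ tags g (nt1 g r) ∧
       r' = ⟨some (r, some a, cB, true), [Symbol.terminal a]⟩) ∨
    (∃ (r : ContextFreeRule T g.NT) (cA : Option T) (a : T), some a ∈ tags g (nt2 g r) ∧
       r' = ⟨some (r, cA, some a, false), [Symbol.terminal a]⟩) ∨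
    (∃ ρ, ρ ∈ g.rules ∧ ρ.input = g.initial ∧
       (ρ.output = [] ∨ ∃ a : T, ρ.output = [Symbol.terminal a]) ∧
       r' = ⟨none, ρ.output.map (mapSym fun _ => (none : NTD g))⟩) := by
  rcases Finset.mem_union.1 h with h | h
  · rcases Finset.mem_union.1 h with h | h
    · obtain ⟨r, hrf, h⟩ := Finset.mem_biUnion.1 h
      obtain ⟨hr, hb⟩ := Finset.mem_filter.1 hrf
      obtain ⟨cA, hcA, h⟩ := Finset.mem_biUnion.1 h
      obtain ⟨cB, hcB, h⟩ := Finset.mem_biUnion.1 h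
      obtain ⟨X', hX, rfl⟩ := Finset.mem_image.1 h
      exact Or.inl ⟨r, cA, cB, X', hr, hb, hcA, hcB, hX, rfl⟩
    · obtain ⟨r, hrf, h⟩ := Finset.mem_biUnion.1 h
      obtain ⟨cA, hcA, h⟩ := Finset.mem_biUnion.1 h
      obtain ⟨cB, hcB, h⟩ := Finset.mem_biUnion.1 h
      rcases Finset.mem_union.1 h with h | h
      · cases cA with
        | none => exact absurd h (Finset.notMem_empty _)
        | some a =>
          rw [Finset.mem_singleton.1 h]
          exact Or.inr (Or.inl ⟨r, cB, a, hcA, rfl⟩)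
      · cases cB with
        | none => exact absurd h (Finset.notMem_empty _)
        | some b =>
          rw [Finset.mem_singleton.1 h]
          exact Or.inr (Or.inr (Or.inl ⟨r, cA, b, hcB, rfl⟩))
  · obtain ⟨ρ, hρf, rfl⟩ := Finset.mem_image.1 h
    obtain ⟨hρ, hin, hout⟩ := Finset.mem_filter.1 hρf
    exact Or.inr (Or.inr (Or.inr ⟨ρ, hρ, hin, hout, rfl⟩))

lemma hd_of_mem_parents {X : g.NT} {X' : NTD g} (h : X' ∈ parents g X) : hd g X' = X := by
  rcases (mem_parents_iff g).1 h with ⟨rfl, rfl⟩ | ⟨r₀, cB₀, _, hX, _, rfl⟩ |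
    ⟨r₀, cA₀, _, hX, _, rfl⟩ <;> simpa [hd]

lemma sideTag_of_mem_parents {X : g.NT} {b : Br g} (h : some b ∈ parents g X) :
    sideTag g b = none := by
  rcases (mem_parents_iff g).1 h with ⟨h0, _⟩ | ⟨r₀, cB₀, _, _, _, hb⟩ |
    ⟨r₀, cA₀, _, _, _, hb⟩
  · exact absurd h0 (by simp)
  · injection hb with hb; subst hb; rfl
  · injection hb with hb; subst hb; rfl

/-- Every rule of the constructed grammar maps to a rule of `g` under `hd`. -/
lemma rule_image {r' : ContextFreeRule T (NTD g)} (h : r' ∈ (gD g).rules) :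
    ∃ ρ ∈ g.rules, ρ.input = hd g r'.input ∧ ρ.output = r'.output.map (mapSym (hd g)) := by
  rcases rules_shape g h with ⟨r, cA, cB, X', hr, hb, _, _, hX, rfl⟩ |
    ⟨r, cB, a, hta, rfl⟩ | ⟨r, cA, a, hta, rfl⟩ | ⟨ρ, hρ, hin, hout, rfl⟩
  · refine ⟨r, hr, ?_, ?_⟩
    · exact (hd_of_mem_parents g hX).symm
    · rw [isBin_out g hb]
      simp [pairOut, mapSym, hd]
  · obtain ⟨ρ, hρ, hρin, hρout⟩ := (some_mem_tags_iff g).1 hta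
    exact ⟨ρ, hρ, by simpa [hd] using hρin, by simp [hρout, mapSym]⟩
  · obtain ⟨ρ, hρ, hρin, hρout⟩ := (some_mem_tags_iff g).1 hta
    exact ⟨ρ, hρ, by simpa [hd] using hρin, by simp [hρout, mapSym]⟩
  · refine ⟨ρ, hρ, by simpa [hd] using hin, ?_⟩
    rcases hout with h0 | ⟨a, h0⟩ <;> simp [h0, mapSym]

lemma map_mapSym_terminal {N N' : Type} (f : N → N') (p : List T) :
    (p.map (Symbol.terminal : T → Symbol T N)).map (mapSym f) = p.map Symbol.terminal := by
  simp [List.map_map, Function.comp_def, mapSym]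

/-- Leftmost steps of the constructed grammar map to leftmost steps of `g`. -/
lemma leftmostStep_map {u v : List (Symbol T (gD g).NT)} {A : (gD g).NT}
    (h : LeftmostStep (gD g) u v A) :
    LeftmostStep g (u.map (mapSym (hd g))) (v.map (mapSym (hd g))) (hd g A) := by
  obtain ⟨r', hr', hin, p, s, hu, hv⟩ := h
  obtain ⟨ρ, hρ, hρin, hρout⟩ := rule_image g hr'
  refine ⟨ρ, hρ, by rw [hρin, hin], p, s.map (mapSym (hd g)), ?_, ?_⟩
  · rw [hu]
    simp [mapSym, List.map_map, Function.comp_def]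
  · rw [hv, hρout]
    simp [mapSym, List.map_map, Function.comp_def]

lemma leftmostProduces_map {u v : List (Symbol T (gD g).NT)}
    (h : LeftmostProduces (gD g) u v) :
    LeftmostProduces g (u.map (mapSym (hd g))) (v.map (mapSym (hd g))) := by
  obtain ⟨A, hA⟩ := h
  exact ⟨hd g A, leftmostStep_map g hA⟩

lemma produces_map {u v : List (Symbol T (gD g).NT)} (h : (gD g).Produces u v) :
    g.Produces (u.map (mapSym (hd g))) (v.map (mapSym (hd g))) := by
  obtain ⟨r', hr', hrw⟩ := h
  obtain ⟨p, q, rfl, rfl⟩ := hrw.exists_parts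
  obtain ⟨ρ, hρ, hρin, hρout⟩ := rule_image g hr'
  refine ⟨ρ, hρ, ?_⟩
  have := ContextFreeRule.rewrites_of_exists_parts ρ (p.map (mapSym (hd g))) (q.map (mapSym (hd g)))
  rw [hρin, hρout] at this
  simpa [mapSym] using this

lemma derives_map {u v : List (Symbol T (gD g).NT)} (h : (gD g).Derives u v) :
    g.Derives (u.map (mapSym (hd g))) (v.map (mapSym (hd g))) := by
  induction h with
  | refl => rfl
  | tail _ hp ih => exact ih.trans_produces (produces_map g hp)

/-! ### Counted derivations and splitting -/

/-- Derivations counted by number of steps. -/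
inductive DerIn (g : ContextFreeGrammar.{0} T) :
    List (Symbol T g.NT) → List (Symbol T g.NT) → ℕ → Prop
  | refl (u : List (Symbol T g.NT)) : DerIn g u u 0
  | head {u v w : List (Symbol T g.NT)} {n : ℕ} (h : g.Produces u v) (hvw : DerIn g v w n) :
      DerIn g u w (n + 1)

lemma derIn_of_derives {u v : List (Symbol T g.NT)} (h : g.Derives u v) :
    ∃ n, DerIn g u v n := by
  induction h using Relation.ReflTransGen.head_induction_on with
  | refl => exact ⟨0, DerIn.refl v⟩
  | head hp _ ih =>
    obtain ⟨n, hn⟩ := ih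
    exact ⟨n + 1, DerIn.head hp hn⟩

lemma derIn_zero {u v : List (Symbol T g.NT)} (h : DerIn g u v 0) : u = v := by
  cases h; rfl

lemma derIn_succ {u w : List (Symbol T g.NT)} {n : ℕ} (h : DerIn g u w (n + 1)) :
    ∃ v, g.Produces u v ∧ DerIn g v w n := by
  cases h with
  | head hp hvw => exact ⟨_, hp, hvw⟩

lemma rewrites_append_split {N : Type} {r : ContextFreeRule T N} :
    ∀ {u v x : List (Symbol T N)}, r.Rewrites (u ++ v) x →
      (∃ u', r.Rewrites u u' ∧ x = u' ++ v) ∨ (∃ v', r.Rewrites v v' ∧ x = u ++ v') := by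
  intro u
  induction u with
  | nil => intro v x h; exact Or.inr ⟨x, by simpa using h, by simp⟩
  | cons s u' ih =>
    intro v x h
    cases h with
    | head t =>
      exact Or.inl ⟨r.output ++ u', ContextFreeRule.Rewrites.head u', by simp⟩
    | cons x' hrs =>
      rcases ih hrs with ⟨u₂, hu₂, rfl⟩ | ⟨v₂, hv₂, rfl⟩
      · exact Or.inl ⟨s :: u₂, ContextFreeRule.Rewrites.cons s hu₂, by simp⟩
      · exact Or.inr ⟨v₂, hv₂, by simp⟩

lemma produces_append_split {u v x : List (Symbol T g.NT)} (h : g.Produces (u ++ v) x) :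
    (∃ u', g.Produces u u' ∧ x = u' ++ v) ∨ (∃ v', g.Produces v v' ∧ x = u ++ v') := by
  obtain ⟨r, hr, hrw⟩ := h
  rcases rewrites_append_split hrw with ⟨u', h1, h2⟩ | ⟨v', h1, h2⟩
  · exact Or.inl ⟨u', ⟨r, hr, h1⟩, h2⟩
  · exact Or.inr ⟨v', ⟨r, hr, h1⟩, h2⟩

lemma derIn_split : ∀ {n : ℕ} {u v : List (Symbol T g.NT)} {w : List T},
    DerIn g (u ++ v) (w.map Symbol.terminal) n →
    ∃ n₁ n₂ w₁ w₂, n₁ + n₂ = n ∧ w = w₁ ++ w₂ ∧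
      DerIn g u (w₁.map Symbol.terminal) n₁ ∧ DerIn g v (w₂.map Symbol.terminal) n₂ := by
  intro n
  induction n with
  | zero =>
    intro u v w h
    have huv : u ++ v = w.map Symbol.terminal := derIn_zero g h
    obtain ⟨w₁, w₂, rfl, h1, h2⟩ := List.append_eq_map_iff.1 huv
    exact ⟨0, 0, w₁, w₂, rfl, rfl, h1 ▸ DerIn.refl u, h2 ▸ DerIn.refl v⟩
  | succ n ih =>
    intro u v w h
    obtain ⟨x, hp, hvw⟩ := derIn_succ g h
    rcases produces_append_split g hp with ⟨u', h1, rfl⟩ | ⟨v', h1, rfl⟩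
    · obtain ⟨n₁, n₂, w₁, w₂, hn, hw, d1, d2⟩ := ih hvw
      exact ⟨n₁ + 1, n₂, w₁, w₂, by omega, hw, DerIn.head h1 d1, d2⟩
    · obtain ⟨n₁, n₂, w₁, w₂, hn, hw, d1, d2⟩ := ih hvw
      exact ⟨n₁, n₂ + 1, w₁, w₂, by omega, hw, d1, DerIn.head h1 d2⟩

lemma rewrites_single {N : Type} {r : ContextFreeRule T N} {A : N} {x : List (Symbol T N)}
    (h : r.Rewrites [Symbol.nonterminal A] x) : r.input = A ∧ x = r.output := by
  cases h with
  | head s =>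
    refine ⟨rfl, by simp⟩
  | cons x' hrs => cases hrs

lemma no_produce_terminal {w : List T} {x : List (Symbol T g.NT)}
    (h : g.Produces (w.map Symbol.terminal) x) : False := by
  obtain ⟨r, _, hrw⟩ := h
  obtain ⟨p, q, heq, _⟩ := hrw.exists_parts
  have : Symbol.nonterminal r.input ∈ w.map (Symbol.terminal : T → Symbol T g.NT) := by
    rw [heq]; simp
  simp at this

lemma derIn_terminal {w : List T} {x : List (Symbol T g.NT)} {n : ℕ}
    (h : DerIn g (w.map Symbol.terminal) x n) : x = w.map Symbol.terminal := by
  cases n with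
  | zero => exact (derIn_zero g h).symm
  | succ n =>
    obtain ⟨v, hp, -⟩ := derIn_succ g h
    exact absurd hp (fun hc => no_produce_terminal g hc)

/-! ### Parse trees for Chomsky normal form grammars -/

/-- Parse trees (as a proposition) for a grammar in Chomsky normal form. -/
inductive Parse : g.NT → List T → Prop
  | term {A : g.NT} {a : T} (h : ∃ r ∈ g.rules, r.input = A ∧ r.output = [Symbol.terminal a]) :
      Parse A [a]
  | eps (h : ∃ r ∈ g.rules, r.input = g.initial ∧ r.output = []) : Parse g.initial []
  | bin {A B C : g.NT} {u v : List T}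
      (h : ∃ r ∈ g.rules, r.input = A ∧
        r.output = [Symbol.nonterminal B, Symbol.nonterminal C])
      (hu : Parse B u) (hv : Parse C v) : Parse A (u ++ v)

lemma derIn_parse (hg : IsChomskyNF g) :
    ∀ n : ℕ, ∀ {A : g.NT} {w : List T},
      DerIn g [Symbol.nonterminal A] (w.map Symbol.terminal) n → Parse g A w := by
  intro n
  induction n using Nat.strong_induction_on with
  | _ n ih =>
    intro A w h
    cases n with
    | zero =>
      exfalso
      have := derIn_zero g h
      cases w with
      | nil => simp_all
      | cons a w' => simp_all [List.map_cons]
    | succ m =>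
      obtain ⟨x, hp, hvw⟩ := derIn_succ g h
      obtain ⟨r, hr, hrw⟩ := hp
      obtain ⟨hin, rfl⟩ := rewrites_single hrw
      rcases hg.1 r hr with ⟨B, C, hout⟩ | ⟨a, hout⟩ | ⟨hini, hout⟩
      · rw [hout] at hvw
        have hsplit : DerIn g ([Symbol.nonterminal B] ++ [Symbol.nonterminal C])
            (w.map Symbol.terminal) m := hvw
        obtain ⟨n₁, n₂, w₁, w₂, hn, rfl, d1, d2⟩ := derIn_split g hsplit
        exact Parse.bin ⟨r, hr, hin, hout⟩ (ih n₁ (by omega) d1) (ih n₂ (by omega) d2)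
      · rw [hout] at hvw
        have hvw' : DerIn g (([a] : List T).map Symbol.terminal) (w.map Symbol.terminal) m := hvw
        have : w.map Symbol.terminal = ([a].map Symbol.terminal : List (Symbol T g.NT)) :=
          derIn_terminal g hvw'
        have hw : w = [a] := List.map_injective_iff.2 (fun x y hxy => by
          cases hxy; rfl) this
        rw [hw]
        exact Parse.term ⟨r, hr, hin, hout⟩
      · rw [hout] at hvw
        have hvw' : DerIn g (([] : List T).map Symbol.terminal) (w.map Symbol.terminal) m := hvw
        have : w.map Symbol.terminal = (([] : List T).map Symbol.terminal : List (Symbol T g.NT)) :=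
          derIn_terminal g hvw'
        have hw : w = [] := List.map_injective_iff.2 (fun x y hxy => by
          cases hxy; rfl) this
        rw [hw, ← hin, hini]
        exact Parse.eps ⟨r, hr, hini, hout⟩

lemma parse_nil (hg : IsChomskyNF g) {A : g.NT} {w : List T} (p : Parse g A w) (hw : w = []) :
    A = g.initial := by
  induction p with
  | term h => simp at hw
  | eps h => rfl
  | bin h hu hv ihu ihv =>
    obtain ⟨hu0, hv0⟩ := List.append_eq_nil_iff.1 hw
    obtain ⟨r, hr, hin, hout⟩ := h
    exfalso
    exact hg.2 r hr (by rw [hout, ihu hu0]; simp)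

lemma parse_ne_nil (hg : IsChomskyNF g) {A : g.NT} {w : List T} (p : Parse g A w)
    (hA : A ≠ g.initial) : w ≠ [] := fun hw => hA (parse_nil g hg p hw)

lemma parse_single (hg : IsChomskyNF g) {A : g.NT} {w : List T} (p : Parse g A w) :
    ∀ a : T, w = [a] → ∃ r ∈ g.rules, r.input = A ∧ r.output = [Symbol.terminal a] := by
  induction p with
  | term h =>
    rename_i A' a'
    intro a hw
    obtain rfl : a' = a := by injection hw
    exact h
  | eps h => intro a hw; simp at hw
  | bin h hu hv ihu ihv =>
    intro a hw
    exfalso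
    obtain ⟨r, hr, hin, hout⟩ := h
    rename_i B C u v
    have hB : B ≠ g.initial := fun hB => hg.2 r hr (by rw [hout, hB]; simp)
    have hC : C ≠ g.initial := fun hC => hg.2 r hr (by rw [hout, hC]; simp)
    have hu0 := parse_ne_nil g hg hu hB
    have hv0 := parse_ne_nil g hg hv hC
    have : u.length + v.length = 1 := by
      have := congrArg List.length hw
      simpa using this
    have h1 : 1 ≤ u.length := List.length_pos_iff.2 hu0
    have h2 : 1 ≤ v.length := List.length_pos_iff.2 hv0
    omega

/-- The tag appropriate for a word: `some a` for the singleton `[a]`, `none` otherwise. -/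
def tagFor (w : List T) : Option T :=
  match w with
  | [a] => some a
  | _ => none

lemma tagFor_append {u v : List T} (hu : u ≠ []) (hv : v ≠ []) : tagFor (u ++ v) = none := by
  match u, v with
  | [], _ => exact absurd rfl hu
  | _, [] => exact absurd rfl hv
  | [x], y :: v' => rfl
  | x :: z :: u', y :: v' => rfl

lemma tagFor_some {w : List T} {a : T} (h : tagFor w = some a) : w = [a] := by
  match w with
  | [] => simp [tagFor] at h
  | [b] => obtain rfl : b = a := by simpa [tagFor] using h
           rfl
  | x :: y :: w' => simp [tagFor] at h

/-- Well-formedness of a bracket. -/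
def WFb (b : Br g) : Prop :=
  b.1 ∈ g.rules ∧ IsBin g b.1 ∧ b.2.1 ∈ tags g (nt1 g b.1) ∧ b.2.2.1 ∈ tags g (nt2 g b.1)

lemma parse_derives (hg : IsChomskyNF g) {A : g.NT} {w : List T} (p : Parse g A w) :
    ∀ X' : NTD g,
      ((X' = none ∧ A = g.initial) ∨
       (∃ b : Br g, X' = some b ∧ WFb g b ∧ hd g X' = A ∧ sideTag g b = tagFor w)) →
      (gD g).Derives [Symbol.nonterminal X'] (w.map Symbol.terminal) := by
  induction p with
  | term h =>
    rename_i A' a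
    rintro X' (⟨rfl, rfl⟩ | ⟨⟨r, cA, cB, side⟩, rfl, hWF, hhd, hst⟩)
    · obtain ⟨r, hr, hin, hout⟩ := h
      have hmem := initRule_mem g hr hin (Or.inr ⟨a, hout⟩)
      rw [hout] at hmem
      have : (gD g).Produces [Symbol.nonterminal (none : NTD g)]
          ([a].map Symbol.terminal) := by
        refine ⟨_, hmem, ?_⟩
        simpa [mapSym] using
          (ContextFreeRule.Rewrites.input_output
            (r := (⟨none, [Symbol.terminal a]⟩ : ContextFreeRule T (NTD g))))
      exact this.single
    · obtain ⟨hmem, hbin, hcA, hcB⟩ := hWF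
      cases side with
      | true =>
        have hstt : cA = some a := hst
        subst hstt
        have : (gD g).Produces [Symbol.nonterminal (some (r, some a, cB, true) : NTD g)]
            ([a].map Symbol.terminal) := by
          refine ⟨_, termRule_mem_left g hmem hbin hcA hcB, ?_⟩
          simpa using
            (ContextFreeRule.Rewrites.input_output
              (r := (⟨some (r, some a, cB, true), [Symbol.terminal a]⟩ :
                ContextFreeRule T (NTD g))))
        exact this.single
      | false =>
        have hstt : cB = some a := hst
        subst hstt
        have : (gD g).Produces [Symbol.nonterminal (some (r, cA, some a, false) : NTD g)]
            ([a].map Symbol.terminal) := by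
          refine ⟨_, termRule_mem_right g hmem hbin hcA hcB, ?_⟩
          simpa using
            (ContextFreeRule.Rewrites.input_output
              (r := (⟨some (r, cA, some a, false), [Symbol.terminal a]⟩ :
                ContextFreeRule T (NTD g))))
        exact this.single
  | eps h =>
    rintro X' (⟨rfl, -⟩ | ⟨⟨r, cA, cB, side⟩, rfl, hWF, hhd, hst⟩)
    · obtain ⟨r, hr, hin, hout⟩ := h
      have hmem := initRule_mem g hr hin (Or.inl hout)
      rw [hout] at hmem
      have : (gD g).Produces [Symbol.nonterminal (none : NTD g)]
          (([] : List T).map Symbol.terminal) := by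
        refine ⟨_, hmem, ?_⟩
        simpa using
          (ContextFreeRule.Rewrites.input_output
            (r := (⟨none, ([] : List (Symbol T (NTD g)))⟩ : ContextFreeRule T (NTD g))))
      exact this.single
    · exfalso
      obtain ⟨hmem, hbin, -, -⟩ := hWF
      apply hg.2 r hmem
      rw [isBin_out g hbin]
      cases side with
      | true =>
        have hnt : nt1 g r = g.initial := hhd
        rw [hnt]; simp
      | false =>
        have hnt : nt2 g r = g.initial := hhd
        rw [hnt]; simp
  | bin h hu hv ihu ihv =>
    rename_i A' B C u v
    intro X' hX'
    obtain ⟨r0, hr0, hin0, hout0⟩ := h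
    have hrρ : r0 = ⟨A', [Symbol.nonterminal B, Symbol.nonterminal C]⟩ := by
      cases r0; simp_all
    set ρ : ContextFreeRule T g.NT := ⟨A', [Symbol.nonterminal B, Symbol.nonterminal C]⟩ with hρ
    have hρmem : ρ ∈ g.rules := hrρ ▸ hr0
    have hρbin : IsBin g ρ := ⟨B, C, rfl⟩
    have hnt1 : nt1 g ρ = B := rfl
    have hnt2 : nt2 g ρ = C := rfl
    have hB : B ≠ g.initial := fun hB => hg.2 ρ hρmem (by rw [hρ, hB]; simp)
    have hC : C ≠ g.initial := fun hC => hg.2 ρ hρmem (by rw [hρ, hC]; simp)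
    have hu0 := parse_ne_nil g hg hu hB
    have hv0 := parse_ne_nil g hg hv hC
    have htf : tagFor (u ++ v) = none := tagFor_append hu0 hv0
    -- tags of the children
    have hcA : tagFor u ∈ tags g B := by
      cases htu : tagFor u with
      | none => exact none_mem_tags g B
      | some a =>
        obtain ⟨r1, hr1, hin1, hout1⟩ := parse_single g hg hu a (tagFor_some htu)
        exact (some_mem_tags_iff g).2 ⟨r1, hr1, hin1, hout1⟩
    have hcB : tagFor v ∈ tags g C := by
      cases htv : tagFor v with
      | none => exact none_mem_tags g C
      | some a =>
        obtain ⟨r1, hr1, hin1, hout1⟩ := parse_single g hg hv a (tagFor_some htv)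
        exact (some_mem_tags_iff g).2 ⟨r1, hr1, hin1, hout1⟩
    -- X' is a parent of A'
    have hXpar : X' ∈ parents g ρ.input := by
      rw [mem_parents_iff]
      rcases hX' with ⟨rfl, hA⟩ | ⟨⟨r1, cA1, cB1, side⟩, rfl, hWF, hhd, hst⟩
      · exact Or.inl ⟨rfl, hA⟩
      · obtain ⟨hmem1, hbin1, hcA1, hcB1⟩ := hWF
        rw [htf] at hst
        cases side with
        | true =>
          have hc : cA1 = none := hst
          subst hc
          have hnt : nt1 g r1 = A' := hhd
          exact Or.inr (Or.inl ⟨r1, cB1, hmem1, hnt, hcB1, rfl⟩)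
        | false =>
          have hc : cB1 = none := hst
          subst hc
          have hnt : nt2 g r1 = A' := hhd
          exact Or.inr (Or.inr ⟨r1, cA1, hmem1, hnt, hcA1, rfl⟩)
    have hrule := pairRule_mem g hρmem hρbin (hnt1 ▸ hcA) (hnt2 ▸ hcB) hXpar
    have step1 : (gD g).Produces [Symbol.nonterminal X'] (pairOut g ρ (tagFor u) (tagFor v)) := by
      refine ⟨_, hrule, ?_⟩
      exact ContextFreeRule.Rewrites.input_output
        (r := (⟨X', pairOut g ρ (tagFor u) (tagFor v)⟩ : ContextFreeRule T (NTD g)))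
    have d1 : (gD g).Derives
        [Symbol.nonterminal (some (ρ, tagFor u, tagFor v, true) : NTD g)]
        (u.map Symbol.terminal) := by
      refine ihu _ (Or.inr ⟨(ρ, tagFor u, tagFor v, true), rfl, ?_, ?_, rfl⟩)
      · exact ⟨hρmem, hρbin, hnt1 ▸ hcA, hnt2 ▸ hcB⟩
      · exact hnt1
    have d2 : (gD g).Derives
        [Symbol.nonterminal (some (ρ, tagFor u, tagFor v, false) : NTD g)]
        (v.map Symbol.terminal) := by
      refine ihv _ (Or.inr ⟨(ρ, tagFor u, tagFor v, false), rfl, ?_, ?_, rfl⟩)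
      · exact ⟨hρmem, hρbin, hnt1 ▸ hcA, hnt2 ▸ hcB⟩
      · exact hnt2
    refine step1.trans_derives ?_
    have hsplitgoal : pairOut g ρ (tagFor u) (tagFor v) =
        [Symbol.nonterminal (some (ρ, tagFor u, tagFor v, true) : NTD g)] ++
        [Symbol.nonterminal (some (ρ, tagFor u, tagFor v, false) : NTD g)] := rfl
    rw [hsplitgoal, List.map_append]
    exact (d1.append_right _).trans (d2.append_left _)

lemma gD_language (hg : IsChomskyNF g) : (gD g).language = g.language := by
  apply Set.eq_of_subset_of_subset
  · intro w hw
    have h1 : (gD g).Derives [Symbol.nonterminal (gD g).initial] (w.map Symbol.terminal) := hw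
    have h2 := derives_map g h1
    have he1 : ([Symbol.nonterminal (gD g).initial] :
        List (Symbol T (gD g).NT)).map (mapSym (hd g)) = [Symbol.nonterminal g.initial] := rfl
    have he2 : (w.map (Symbol.terminal : T → Symbol T (gD g).NT)).map (mapSym (hd g)) =
        w.map Symbol.terminal := map_mapSym_terminal (hd g) w
    rw [he1, he2] at h2
    exact h2
  · intro w hw
    have h1 : g.Derives [Symbol.nonterminal g.initial] (w.map Symbol.terminal) := hw
    obtain ⟨n, hn⟩ := derIn_of_derives g h1
    have hp := derIn_parse g hg n hn
    exact parse_derives g hg hp none (Or.inl ⟨rfl, rfl⟩)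

/-! ### The constructed grammar is in Dyck normal form -/

lemma pairOut_ne_terminal (r : ContextFreeRule T g.NT) (cA cB : Option T) (a : T) :
    pairOut g r cA cB ≠ [Symbol.terminal a] := by
  simp [pairOut]

lemma gD_chomsky : IsChomskyNF (gD g) := by
  constructor
  · intro r' hr'
    rcases rules_shape g hr' with ⟨r, cA, cB, X', _, _, _, _, _, rfl⟩ |
      ⟨r, cB, a, _, rfl⟩ | ⟨r, cA, a, _, rfl⟩ | ⟨ρ, _, _, hout, rfl⟩
    · exact Or.inl ⟨_, _, rfl⟩
    · exact Or.inr (Or.inl ⟨a, rfl⟩)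
    · exact Or.inr (Or.inl ⟨a, rfl⟩)
    · rcases hout with h0 | ⟨a, h0⟩
      · exact Or.inr (Or.inr ⟨rfl, by simp [h0]⟩)
      · exact Or.inr (Or.inl ⟨a, by simp [h0, mapSym]⟩)
  · intro r' hr'
    rcases rules_shape g hr' with ⟨r, cA, cB, X', _, _, _, _, _, rfl⟩ |
      ⟨r, cB, a, _, rfl⟩ | ⟨r, cA, a, _, rfl⟩ | ⟨ρ, _, _, hout, rfl⟩
    · simp [pairOut, gD]
    · simp
    · simp
    · rcases hout with h0 | ⟨a, h0⟩ <;> simp [h0, mapSym]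

lemma gD_dyck : IsDyckNF (gD g) := by
  refine ⟨gD_chomsky g, ?_, ?_, ?_⟩
  · -- condition (2)
    intro r' hr' a hout hin r'' hr'' hin''
    rcases rules_shape g hr' with ⟨r, cA, cB, X', _, _, _, _, hX, rfl⟩ |
      ⟨r, cB, a', _, rfl⟩ | ⟨r, cA, a', _, rfl⟩ | ⟨ρ, _, _, _, rfl⟩
    · exact absurd hout (pairOut_ne_terminal g r cA cB a)
    · rcases rules_shape g hr'' with ⟨r₂, cA₂, cB₂, X₂, _, _, _, _, hX₂, rfl⟩ |
        ⟨r₂, cB₂, a₂, _, rfl⟩ | ⟨r₂, cA₂, a₂, _, rfl⟩ | ⟨ρ₂, _, _, _, rfl⟩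
      · exfalso
        have hXeq : X₂ = some (r, some a', cB, true) := hin''
        rcases (mem_parents_iff g).1 hX₂ with ⟨h0, -⟩ | ⟨r₀, cB₀, -, -, -, h0⟩ |
          ⟨r₀, cA₀, -, -, -, h0⟩ <;> rw [hXeq] at h0 <;> simp at h0
      · have h1 : (some (r₂, some a₂, cB₂, true) : NTD g) = some (r, some a', cB, true) :=
          hin''
        simp only [Option.some.injEq, Prod.mk.injEq] at h1
        obtain ⟨rfl, h2, rfl, -⟩ := h1
        subst h2
        rfl
      · exfalso
        have h1 : (some (r₂, cA₂, some a₂, false) : NTD g) = some (r, some a', cB, true) :=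
          hin''
        simp only [Option.some.injEq, Prod.mk.injEq] at h1
        exact Bool.noConfusion h1.2.2.2
      · exact absurd hin'' (by simp)
    · rcases rules_shape g hr'' with ⟨r₂, cA₂, cB₂, X₂, _, _, _, _, hX₂, rfl⟩ |
        ⟨r₂, cB₂, a₂, _, rfl⟩ | ⟨r₂, cA₂, a₂, _, rfl⟩ | ⟨ρ₂, _, _, _, rfl⟩
      · exfalso
        have hXeq : X₂ = some (r, cA, some a', false) := hin''
        rcases (mem_parents_iff g).1 hX₂ with ⟨h0, -⟩ | ⟨r₀, cB₀, -, -, -, h0⟩ |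
          ⟨r₀, cA₀, -, -, -, h0⟩ <;> rw [hXeq] at h0 <;> simp at h0
      · exfalso
        have h1 : (some (r₂, some a₂, cB₂, true) : NTD g) = some (r, cA, some a', false) :=
          hin''
        simp only [Option.some.injEq, Prod.mk.injEq] at h1
        exact Bool.noConfusion h1.2.2.2
      · have h1 : (some (r₂, cA₂, some a₂, false) : NTD g) = some (r, cA, some a', false) :=
          hin''
        simp only [Option.some.injEq, Prod.mk.injEq] at h1
        obtain ⟨rfl, rfl, h2, -⟩ := h1
        subst h2
        rfl
      · exact absurd hin'' (by simp)
    · exact absurd rfl hin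
  · -- condition (3)
    intro r' hr' r'' hr'' A B B' hout hout'
    have hpair : ∃ r cA cB, r'.output = pairOut g r cA cB := by
      rcases rules_shape g hr' with ⟨r, cA, cB, X', _, _, _, _, _, rfl⟩ |
        ⟨r, cB, a', _, rfl⟩ | ⟨r, cA, a', _, rfl⟩ | ⟨ρ, _, _, ho, rfl⟩
      · exact ⟨_, _, _, rfl⟩
      · simp_all
      · simp_all
      · exfalso; rcases ho with h0 | ⟨a, h0⟩ <;> simp_all [mapSym]
    have hpair' : ∃ r cA cB, r''.output = pairOut g r cA cB := by
      rcases rules_shape g hr'' with ⟨r, cA, cB, X', _, _, _, _, _, rfl⟩ |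
        ⟨r, cB, a', _, rfl⟩ | ⟨r, cA, a', _, rfl⟩ | ⟨ρ, _, _, ho, rfl⟩
      · exact ⟨_, _, _, rfl⟩
      · simp_all
      · simp_all
      · exfalso; rcases ho with h0 | ⟨a, h0⟩ <;> simp_all [mapSym]
    obtain ⟨r, cA, cB, he⟩ := hpair
    obtain ⟨r₂, cA₂, cB₂, he'⟩ := hpair'
    rw [hout] at he
    rw [he'] at hout'
    simp only [pairOut, List.cons.injEq] at he hout'
    obtain ⟨hA, hB, -⟩ := he
    obtain ⟨-, hB', -⟩ := hout'
    have h1 : A = some (r, cA, cB, true) := by injection hA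
    have h2 : some (r₂, cA₂, cB₂, false) = A := by injection hB'
    rw [h1] at h2
    simp at h2
  · -- condition (4)
    intro r' hr' r'' hr'' A A' B B' hout hout'
    have hpair : ∃ r cA cB, r'.output = pairOut g r cA cB := by
      rcases rules_shape g hr' with ⟨r, cA, cB, X', _, _, _, _, _, rfl⟩ |
        ⟨r, cB, a', _, rfl⟩ | ⟨r, cA, a', _, rfl⟩ | ⟨ρ, _, _, ho, rfl⟩
      · exact ⟨_, _, _, rfl⟩
      · simp_all
      · simp_all
      · exfalso; rcases ho with h0 | ⟨a, h0⟩ <;> simp_all [mapSym]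
    have hpair' : ∃ r cA cB, r''.output = pairOut g r cA cB := by
      rcases rules_shape g hr'' with ⟨r, cA, cB, X', _, _, _, _, _, rfl⟩ |
        ⟨r, cB, a', _, rfl⟩ | ⟨r, cA, a', _, rfl⟩ | ⟨ρ, _, _, ho, rfl⟩
      · exact ⟨_, _, _, rfl⟩
      · simp_all
      · simp_all
      · exfalso; rcases ho with h0 | ⟨a, h0⟩ <;> simp_all [mapSym]
    obtain ⟨r, cA, cB, he⟩ := hpair
    obtain ⟨r₂, cA₂, cB₂, he'⟩ := hpair'
    rw [hout] at he
    rw [hout'] at he'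
    simp only [pairOut, List.cons.injEq] at he he'
    obtain ⟨hA, hB, -⟩ := he
    obtain ⟨hA', hB', -⟩ := he'
    have h1 : A = some (r, cA, cB, true) := by injection hA
    have h2 : B = some (r, cA, cB, false) := by injection hB
    have h3 : A' = some (r₂, cA₂, cB₂, true) := by injection hA'
    have h4 : B' = some (r₂, cA₂, cB₂, false) := by injection hB'
    constructor
    · intro hBB
      have hBB' : (some (r, cA, cB, false) : NTD g) = some (r₂, cA₂, cB₂, false) := by
        rw [← h2, ← h4]; exact hBB
      simp only [Option.some.injEq, Prod.mk.injEq] at hBB'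
      obtain ⟨rfl, rfl, rfl, -⟩ := hBB'
      rw [h1, h3]
    · intro hAA
      have hAA' : (some (r, cA, cB, true) : NTD g) = some (r₂, cA₂, cB₂, true) := by
        rw [← h1, ← h3]; exact hAA
      simp only [Option.some.injEq, Prod.mk.injEq] at hAA'
      obtain ⟨rfl, rfl, rfl, -⟩ := hAA'
      rw [h2, h4]

end DyckConstruction

/-- For every grammar `G` in Chomsky normal form there are a grammar `G'` in
Dyck normal form with `L(G') = L(G)` and a map `h_d` (identity on terminals, axiom to
axiom) such that applying `h_d` symbol-wise to any leftmost derivation in `G'` yields a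
leftmost derivation in `G`. -/
theorem exists_dyckNF_leftmost_hom (g : ContextFreeGrammar.{0} T) (hg : IsChomskyNF g) :
    ∃ (g' : ContextFreeGrammar.{0} T) (h_d : g'.NT → g.NT),
      IsDyckNF g' ∧ g'.language = g.language ∧ h_d g'.initial = g.initial ∧
      ∀ D : List (List (Symbol T g'.NT)), D.Chain' (LeftmostProduces g') →
        (D.map (List.map (mapSym h_d))).Chain' (LeftmostProduces g) := by
  refine ⟨gD g, hd g, gD_dyck g, gD_language g hg, rfl, ?_⟩
  intro D hD
  exact List.isChain_map_of_isChain _ (fun u v h => leftmostProduces_map g h) hD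

end CS
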